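/- arXiv:2203.01534 — 2 statements merged into one kernel-verified Lean document; each statement's English description precedes it below -/
import Mathlib

section
/- (Equivalence of grad-div stabilized Arrow–Hurwicz and iterated penalty Picard) Assume the finite element spaces satisfy ∇·X_h = Q_h. If the grad-div stabilized Arrow–Hurwicz iteration is run with parameters ρ = ν^{-1}, α = ε/ν, and γ = ρ/α = ε^{-1}, then its iterates coincide with those of the iterated penalty Picard iteration with penalty parameter ε: i.e., p^{m+1} = p^m − γ ∇·u^{m+1} and u^{m+1} satisfies ν(∇u^{m+1}, ∇v) + b*(u^m, u^{m+1}, v) − (p^{m+1}, ∇·v) = (f, v) for all v ∈ X_h. -/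
open scoped RealInnerProductSpace

/-- Equivalence of grad-div stabilized Arrow–Hurwicz and iterated
penalty Picard.  The velocity space `X` carries the gradient inner product
(`⟪u,v⟫ = (∇u,∇v)`), `Q` the `L²` inner product, `d : X → Q` is the divergence
(with `∇·X_h = Q_h`, i.e. `d` surjective), `b` the trilinear convection form and
`f` the forcing functional.  If the grad-div stabilized AH step is run with
`ρ = ν⁻¹`, `α = ε/ν`, `γ = ρ/α = ε⁻¹`, then `p^{m+1} = p^m - γ ∇·u^{m+1}` and
`(u^{m+1}, p^{m+1})` satisfies the iterated penalty Picard equations. -/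
theorem graddiv_AH_equals_IPP
    {X Q : Type*} [NormedAddCommGroup X] [InnerProductSpace ℝ X]
    [NormedAddCommGroup Q] [InnerProductSpace ℝ Q]
    (d : X →ₗ[ℝ] Q) (hsurj : Function.Surjective d)
    (b : X →ₗ[ℝ] X →ₗ[ℝ] X →ₗ[ℝ] ℝ)
    (f : X →ₗ[ℝ] ℝ)
    (ν ε ρ α γ : ℝ) (hν : 0 < ν) (hε : 0 < ε)
    (hρ : ρ = ν⁻¹) (hα : α = ε / ν) (hγ : γ = ρ / α)
    (u0 u1 : X) (p0 p1 : Q)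
    (hmom : ∀ v : X, ρ⁻¹ * ⟪u1 - u0, v⟫ + ν * ⟪u0, v⟫ + b u0 u1 v
        + γ * ⟪d u1, d v⟫ - ⟪d v, p0⟫ = f v)
    (hpre : ∀ q : Q, α * ⟪p1 - p0, q⟫ + ρ * ⟪d u1, q⟫ = 0) :
    γ = ε⁻¹ ∧
    p1 = p0 - γ • d u1 ∧
    (∀ v : X, ν * ⟪u1, v⟫ + b u0 u1 v - ⟪p1, d v⟫ = f v) ∧
    (∀ q : Q, ε * ⟪p1, q⟫ + ⟪d u1, q⟫ = ε * ⟪p0, q⟫) := by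
  have hγε : γ = ε⁻¹ := by
    subst hρ hα hγ
    field_simp
  have hαpos : 0 < α := by rw [hα]; positivity
  have hρpos : 0 < ρ := by rw [hρ]; positivity
  -- pressure update
  have hw : α • (p1 - p0) + ρ • d u1 = 0 := by
    have h := hpre (α • (p1 - p0) + ρ • d u1)
    rw [← inner_self_eq_zero (𝕜 := ℝ)]
    have : ⟪α • (p1 - p0) + ρ • d u1, α • (p1 - p0) + ρ • d u1⟫
        = α * ⟪p1 - p0, α • (p1 - p0) + ρ • d u1⟫
          + ρ * ⟪d u1, α • (p1 - p0) + ρ • d u1⟫ := by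
      rw [inner_add_left, real_inner_smul_left, real_inner_smul_left]
    rw [this, h]
  have hp : p1 = p0 - γ • d u1 := by
    have : p1 - p0 = -(γ • d u1) := by
      have := hw
      have hsolve : α • (p1 - p0) = -(ρ • d u1) := by
        linear_combination (norm := abel) this
      have := congrArg (fun x => α⁻¹ • x) hsolve
      simp only [smul_smul, inv_mul_cancel₀ hαpos.ne', one_smul, smul_neg] at this
      rw [this, hγ, div_eq_mul_inv, mul_comm, ← smul_smul]
    rw [sub_eq_iff_eq_add] at this
    rw [eq_sub_iff_add_eq, this]; abel
  refine ⟨hγε, hp, ?_, ?_⟩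
  · intro v
    have h := hmom v
    have hρinv : ρ⁻¹ = ν := by rw [hρ, inv_inv]
    rw [hρinv, inner_sub_left] at h
    have hp1 : ⟪p1, d v⟫ = ⟪p0, d v⟫ - γ * ⟪d u1, d v⟫ := by
      rw [hp, inner_sub_left, real_inner_smul_left]
    rw [real_inner_comm p0 (d v)] at h
    rw [hp1]
    linarith
  · intro q
    have hεγ : ε * γ = 1 := by rw [hγε, mul_inv_cancel₀ hε.ne']
    rw [hp, inner_sub_left, real_inner_smul_left]
    linear_combination (-⟪d u1, q⟫) * hεγ
end

section
/- (Lipschitz continuity of the derivative of the AH fixed-point operator) For all u, w, θ ∈ X_h and p, s, ξ ∈ Q_h, ‖G'(u+w, p+s; θ, ξ) − G'(u,p; θ, ξ)‖_H ≤ (4ρ²M²C_L²/(1 − ρ²α^{-1}))^{1/2} ‖(θ,ξ)‖_H ‖(w,s)‖_H, provided ρ² < α. -/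
open scoped RealInnerProductSpace

set_option maxHeartbeats 3000000

/-- Lipschitz continuity of the derivative of the AH fixed-point
operator: for `ρ² < α`,
`‖G'(u+w,p+s;θ,ξ) - G'(u,p;θ,ξ)‖_H ≤ (4ρ²M²C_L²/(1-ρ²α⁻¹))^{1/2} ‖(θ,ξ)‖_H ‖(w,s)‖_H`,
with `C_L` the Lipschitz constant of `G`, `M` the continuity constant of `b*`,
`‖(v,q)‖_H² = ‖∇v‖² + α‖q‖²`.  `X` carries the gradient inner product. -/
theorem ah_fixed_point_derivative_lipschitz
    {X Q : Type*} [NormedAddCommGroup X] [InnerProductSpace ℝ X]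
    [NormedAddCommGroup Q] [InnerProductSpace ℝ Q]
    (d : X →ₗ[ℝ] Q)
    (b : X →ₗ[ℝ] X →ₗ[ℝ] X →ₗ[ℝ] ℝ) (M : ℝ) (hM0 : 0 ≤ M)
    (hskew : ∀ a c : X, b a c c = 0)
    (hMb : ∀ a c v : X, |b a c v| ≤ M * ‖a‖ * ‖c‖ * ‖v‖)
    (f : X →ₗ[ℝ] ℝ)
    (ρ α γ ν C_L : ℝ) (hρ : 0 < ρ) (hα : 0 < α) (hγ : 0 < γ) (hν : 0 < ν)
    (hρα : ρ ^ 2 < α)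
    (G : X × Q → X × Q) (G' : X × Q → X × Q → X × Q)
    (hG1 : ∀ up : X × Q, ∀ v : X,
      ρ⁻¹ * ⟪(G up).1 - up.1, v⟫ + ν * ⟪up.1, v⟫ + b up.1 (G up).1 v
        + γ * ⟪d (G up).1, d v⟫ - ⟪up.2, d v⟫ = f v)
    (hG2 : ∀ up : X × Q, ∀ q : Q,
      α * ⟪(G up).2 - up.2, q⟫ + ρ * ⟪d (G up).1, q⟫ = 0)
    (hG'1 : ∀ up ws : X × Q, ∀ v : X,
      ⟪(G' up ws).1 - ws.1, v⟫ + ρ * ν * ⟪ws.1, v⟫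
        + ρ * b ws.1 (G up).1 v + ρ * b up.1 (G' up ws).1 v
        + ρ * γ * ⟪d (G' up ws).1, d v⟫ - ρ * ⟪ws.2, d v⟫ = 0)
    (hG'2 : ∀ up ws : X × Q, ∀ q : Q,
      α * ⟪(G' up ws).2 - ws.2, q⟫ + ρ * ⟪d (G' up ws).1, q⟫ = 0)
    (hlip : ∀ up wz : X × Q,
      Real.sqrt (‖(G up).1 - (G wz).1‖ ^ 2 + α * ‖(G up).2 - (G wz).2‖ ^ 2)
        ≤ C_L * Real.sqrt (‖up.1 - wz.1‖ ^ 2 + α * ‖up.2 - wz.2‖ ^ 2)) :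
    ∀ (u w θ : X) (p s ξ : Q),
      Real.sqrt (‖(G' (u + w, p + s) (θ, ξ)).1 - (G' (u, p) (θ, ξ)).1‖ ^ 2
          + α * ‖(G' (u + w, p + s) (θ, ξ)).2 - (G' (u, p) (θ, ξ)).2‖ ^ 2) ≤
        Real.sqrt (4 * ρ ^ 2 * M ^ 2 * C_L ^ 2 / (1 - ρ ^ 2 * α⁻¹))
          * Real.sqrt (‖θ‖ ^ 2 + α * ‖ξ‖ ^ 2)
          * Real.sqrt (‖w‖ ^ 2 + α * ‖s‖ ^ 2) := by
  intro u w θ p s ξ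
  have hρ0 : ρ ≠ 0 := ne_of_gt hρ
  have hcρ : ρ * ρ⁻¹ = 1 := mul_inv_cancel₀ hρ0
  -- skew symmetry in the last two arguments
  have hbswap : ∀ a c v : X, b a c v = - b a v c := by
    intro a c v
    have h := hskew a (c + v)
    simp only [map_add, LinearMap.add_apply] at h
    have h1 := hskew a c; have h2 := hskew a v
    linarith
  -- ρ-multiplied form of hG1
  have hG1' : ∀ up : X × Q, ∀ v : X,
      ⟪(G up).1 - up.1, v⟫ + ρ * ν * ⟪up.1, v⟫ + ρ * b up.1 (G up).1 v
        + ρ * γ * ⟪d (G up).1, d v⟫ - ρ * ⟪up.2, d v⟫ = ρ * f v := by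
    intro up v
    have h := hG1 up v
    linear_combination ρ * h - ⟪(G up).1 - up.1, v⟫ * hcρ
  -- squared Lipschitz estimate
  have hlip2 : ∀ up wz : X × Q,
      ‖(G up).1 - (G wz).1‖ ^ 2 + α * ‖(G up).2 - (G wz).2‖ ^ 2
        ≤ C_L ^ 2 * (‖up.1 - wz.1‖ ^ 2 + α * ‖up.2 - wz.2‖ ^ 2) := by
    intro up wz
    have h := hlip up wz
    have hA : (0:ℝ) ≤ ‖(G up).1 - (G wz).1‖ ^ 2 + α * ‖(G up).2 - (G wz).2‖ ^ 2 := by positivity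
    have hB : (0:ℝ) ≤ ‖up.1 - wz.1‖ ^ 2 + α * ‖up.2 - wz.2‖ ^ 2 := by positivity
    have h1 := Real.sq_sqrt hA
    have h2 := Real.sq_sqrt hB
    have h3 := Real.sqrt_nonneg (‖(G up).1 - (G wz).1‖ ^ 2 + α * ‖(G up).2 - (G wz).2‖ ^ 2)
    have h4 := Real.sqrt_nonneg (‖up.1 - wz.1‖ ^ 2 + α * ‖up.2 - wz.2‖ ^ 2)
    nlinarith [h, h1, h2, h3, h4]
  -- equation for the pure-q increment at base (v, 0)
  have hD0 : ∀ (v : X) (σ : Q) (y : X),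
      ⟪(G (v, σ)).1 - (G (v, 0)).1, y⟫ + ρ * b v ((G (v, σ)).1 - (G (v, 0)).1) y
        + ρ * γ * ⟪d (G (v, σ)).1 - d (G (v, 0)).1, d y⟫ = ρ * ⟪σ, d y⟫ := by
    intro v σ y
    have h1 := hG1' (v, σ) y
    have h2 := hG1' (v, 0) y
    simp only [map_sub, LinearMap.sub_apply, inner_sub_left, inner_zero_left] at h1 h2 ⊢
    linear_combination h1 - h2
  -- uniqueness for the homogeneous problem
  have huniq : ∀ (a h : X),
      (∀ y : X, ⟪h, y⟫ + ρ * b a h y + ρ * γ * ⟪d h, d y⟫ = 0) → h = 0 := by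
    intro a h hh
    have h1 := hh h
    rw [hskew a h] at h1
    have h2 : (0:ℝ) ≤ ⟪h, h⟫ := real_inner_self_nonneg
    have h3 : (0:ℝ) ≤ ⟪d h, d h⟫ := real_inner_self_nonneg
    have h4 : ⟪h, h⟫ = 0 := by nlinarith [mul_nonneg (mul_pos hρ hγ).le h3]
    exact inner_self_eq_zero.mp h4
  -- homogeneity of q-increments
  have hhom : ∀ (v : X) (σ : Q) (t : ℝ),
      (G (v, t • σ)).1 - (G (v, 0)).1 = t • ((G (v, σ)).1 - (G (v, 0)).1) := by
    intro v σ t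
    have key : ((G (v, t • σ)).1 - (G (v, 0)).1) - t • ((G (v, σ)).1 - (G (v, 0)).1) = 0 := by
      apply huniq v
      intro y
      have h1 := hD0 v (t • σ) y
      have h2 := hD0 v σ y
      simp only [map_sub, map_smul, LinearMap.sub_apply, LinearMap.smul_apply,
        inner_sub_left, real_inner_smul_left, smul_eq_mul] at h1 h2 ⊢
      linear_combination h1 - t * h2
    exact sub_eq_zero.mp key
  -- universality: the q-increment does not depend on the base velocity
  have huniv : ∀ (v : X) (σ : Q),
      (G (v, σ)).1 - (G (v, 0)).1 = (G ((0:X), σ)).1 - (G ((0:X), (0:Q))).1 := by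
    intro v σ
    have haff : ∀ t : ℝ, (G (v, t • σ)).1 - (G ((0:X), t • σ)).1
        = ((G (v, (0:Q))).1 - (G ((0:X), (0:Q))).1)
          + t • (((G (v, σ)).1 - (G (v, 0)).1) - ((G ((0:X), σ)).1 - (G ((0:X), (0:Q))).1)) := by
      intro t
      have h1 := hhom v σ t
      have h2 := hhom 0 σ t
      have e1 : (G (v, t • σ)).1 = t • ((G (v, σ)).1 - (G (v, 0)).1) + (G (v, 0)).1 :=
        sub_eq_iff_eq_add.mp h1
      have e2 : (G ((0:X), t • σ)).1 = t • ((G ((0:X), σ)).1 - (G ((0:X), (0:Q))).1) + (G ((0:X), (0:Q))).1 :=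
        sub_eq_iff_eq_add.mp h2
      rw [e1, e2, smul_sub]
      module
    set η := ((G (v, σ)).1 - (G (v, 0)).1) - ((G ((0:X), σ)).1 - (G ((0:X), (0:Q))).1) with hηdef
    have hb2 : ∀ t : ℝ, ‖((G (v, (0:Q))).1 - (G ((0:X), (0:Q))).1) + t • η‖ ^ 2 ≤ C_L ^ 2 * ‖v‖ ^ 2 := by
      intro t
      have h := hlip2 (v, t • σ) ((0:X), t • σ)
      rw [haff t] at h
      simp only [sub_zero, sub_self, norm_zero] at h
      nlinarith [sq_nonneg ‖(G (v, t • σ)).2 - (G ((0:X), t • σ)).2‖, hα.le,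
        mul_nonneg hα.le (sq_nonneg ‖(G (v, t • σ)).2 - (G ((0:X), t • σ)).2‖)]
    have hη0 : η = 0 := by
      by_contra hne
      have hpos : 0 < ‖η‖ := norm_pos_iff.mpr hne
      set Δ := (G (v, (0:Q))).1 - (G ((0:X), (0:Q))).1 with hΔdef
      have hC2n : (0:ℝ) ≤ C_L ^ 2 * ‖v‖ ^ 2 := by positivity
      set t := Real.sqrt (C_L ^ 2 * ‖v‖ ^ 2 + 1) / ‖η‖ with htdef
      have h1 := hb2 t
      have h2 := hb2 (-t)
      have e1 : ∀ r : ℝ, ‖Δ + r • η‖ ^ 2 = ‖Δ‖ ^ 2 + 2 * (r * ⟪Δ, η⟫) + r ^ 2 * ‖η‖ ^ 2 := by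
        intro r
        rw [norm_add_sq_real, real_inner_smul_right, norm_smul]
        simp [mul_pow, sq_abs]
      rw [e1 t] at h1
      rw [e1 (-t)] at h2
      have h3 : t ^ 2 * ‖η‖ ^ 2 = C_L ^ 2 * ‖v‖ ^ 2 + 1 := by
        rw [htdef, div_pow, Real.sq_sqrt (by linarith : (0:ℝ) ≤ C_L ^ 2 * ‖v‖ ^ 2 + 1)]
        field_simp
      nlinarith [sq_nonneg ‖Δ‖]
    exact sub_eq_zero.mp hη0
  -- the δ-equation at base 0
  have hδeq : ∀ (σ : Q) (y : X),
      ⟪(G ((0:X), σ)).1 - (G ((0:X), (0:Q))).1, y⟫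
        + ρ * γ * ⟪d (G ((0:X), σ)).1 - d (G ((0:X), (0:Q))).1, d y⟫ = ρ * ⟪σ, d y⟫ := by
    intro σ y
    have h := hD0 0 σ y
    simp only [map_zero, LinearMap.zero_apply, mul_zero, add_zero] at h
    linarith [h]
  -- rigidity : b kills δσ in second slot
  have hbδ : ∀ (a : X) (σ : Q) (y : X),
      b a ((G ((0:X), σ)).1 - (G ((0:X), (0:Q))).1) y = 0 := by
    intro a σ y
    have h1 := hD0 a σ y
    have hdd : d (G (a, σ)).1 - d (G (a, 0)).1 = d (G ((0:X), σ)).1 - d (G ((0:X), (0:Q))).1 := by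
      rw [← map_sub, ← map_sub, huniv a σ]
    rw [huniv a σ, hdd] at h1
    have h2 := hδeq σ y
    have h3 : ρ * b a ((G ((0:X), σ)).1 - (G ((0:X), (0:Q))).1) y = 0 := by
      linear_combination h1 - h2
    rcases mul_eq_zero.mp h3 with h | h
    · exact absurd h hρ0
    · exact h
  have hbδ' : ∀ (a y : X) (σ : Q),
      b a y ((G ((0:X), σ)).1 - (G ((0:X), (0:Q))).1) = 0 := by
    intro a y σ
    rw [hbswap, hbδ, neg_zero]
  -- bound on the derivative : ‖G'(vp;ws)₁‖ ≤ C_L ‖ws‖_H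
  have hgb : ∀ vp ws : X × Q,
      ‖(G' vp ws).1‖ ≤ C_L * Real.sqrt (‖ws.1‖ ^ 2 + α * ‖ws.2‖ ^ 2) := by
    intro vp ws
    have hT'0 : (0:ℝ) ≤ Real.sqrt (‖ws.1‖ ^ 2 + α * ‖ws.2‖ ^ 2) := Real.sqrt_nonneg _
    have hTsq : Real.sqrt (‖ws.1‖ ^ 2 + α * ‖ws.2‖ ^ 2) ^ 2 = ‖ws.1‖ ^ 2 + α * ‖ws.2‖ ^ 2 :=
      Real.sq_sqrt (by positivity)
    have hCLT : (0:ℝ) ≤ C_L * Real.sqrt (‖ws.1‖ ^ 2 + α * ‖ws.2‖ ^ 2) := by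
      have h0 := hlip (vp.1 + ws.1, vp.2 + ws.2) vp
      simp only [add_sub_cancel_left] at h0
      exact le_trans (Real.sqrt_nonneg _) h0
    have main : ∀ t : ℝ, 0 < t →
        ‖(G' vp ws).1‖ ≤ C_L * Real.sqrt (‖ws.1‖ ^ 2 + α * ‖ws.2‖ ^ 2)
          + (ρ * M * ‖ws.1‖ * (C_L * Real.sqrt (‖ws.1‖ ^ 2 + α * ‖ws.2‖ ^ 2))) * t := by
      intro t ht
      have hDtb : ‖(G (vp.1 + t • ws.1, vp.2 + t • ws.2)).1 - (G vp).1‖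
          ≤ C_L * Real.sqrt (‖ws.1‖ ^ 2 + α * ‖ws.2‖ ^ 2) * t := by
        have h := hlip2 (vp.1 + t • ws.1, vp.2 + t • ws.2) vp
        simp only [add_sub_cancel_left] at h
        have hsm1 : ‖t • ws.1‖ ^ 2 = t ^ 2 * ‖ws.1‖ ^ 2 := by
          rw [norm_smul]; simp [mul_pow, sq_abs]
        have hsm2 : ‖t • ws.2‖ ^ 2 = t ^ 2 * ‖ws.2‖ ^ 2 := by
          rw [norm_smul]; simp [mul_pow, sq_abs]
        rw [hsm1, hsm2] at h
        have hc : (C_L * Real.sqrt (‖ws.1‖ ^ 2 + α * ‖ws.2‖ ^ 2) * t) ^ 2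
            = C_L ^ 2 * (t ^ 2 * ‖ws.1‖ ^ 2 + α * (t ^ 2 * ‖ws.2‖ ^ 2)) := by
          rw [mul_pow, mul_pow, hTsq]; ring
        have hcn : (0:ℝ) ≤ C_L * Real.sqrt (‖ws.1‖ ^ 2 + α * ‖ws.2‖ ^ 2) * t :=
          mul_nonneg hCLT ht.le
        nlinarith [norm_nonneg ((G (vp.1 + t • ws.1, vp.2 + t • ws.2)).1 - (G vp).1),
          mul_nonneg hα.le (sq_nonneg ‖(G (vp.1 + t • ws.1, vp.2 + t • ws.2)).2 - (G vp).2‖)]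
      have hteq : ∀ y : X,
          ⟪((G (vp.1 + t • ws.1, vp.2 + t • ws.2)).1 - (G vp).1) - t • (G' vp ws).1, y⟫
            + ρ * b vp.1 (((G (vp.1 + t • ws.1, vp.2 + t • ws.2)).1 - (G vp).1) - t • (G' vp ws).1) y
            + ρ * t * b ws.1 ((G (vp.1 + t • ws.1, vp.2 + t • ws.2)).1 - (G vp).1) y
            + ρ * γ * ⟪d ((G (vp.1 + t • ws.1, vp.2 + t • ws.2)).1 - (G vp).1) - t • d (G' vp ws).1, d y⟫ = 0 := by
        intro y
        have h1 := hG1' (vp.1 + t • ws.1, vp.2 + t • ws.2) y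
        have h2 := hG1' vp y
        have h3 := hG'1 vp ws y
        simp only [map_sub, map_add, map_smul, LinearMap.sub_apply, LinearMap.add_apply,
          LinearMap.smul_apply, inner_sub_left, inner_add_left, real_inner_smul_left,
          smul_eq_mul] at h1 h2 h3 ⊢
        linear_combination h1 - h2 - t * h3
      set x := ((G (vp.1 + t • ws.1, vp.2 + t • ws.2)).1 - (G vp).1) - t • (G' vp ws).1 with hxdef
      have hxd : d ((G (vp.1 + t • ws.1, vp.2 + t • ws.2)).1 - (G vp).1) - t • d (G' vp ws).1 = d x := by
        rw [hxdef]; simp [map_sub, map_smul]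
      have h5 := hteq x
      rw [hxd, hskew vp.1 x] at h5
      have h6 : ⟪x, x⟫ ≤ ρ * t * (M * ‖ws.1‖ * ‖(G (vp.1 + t • ws.1, vp.2 + t • ws.2)).1 - (G vp).1‖ * ‖x‖) := by
        have h7 := hMb ws.1 ((G (vp.1 + t • ws.1, vp.2 + t • ws.2)).1 - (G vp).1) x
        have h8 : (0:ℝ) ≤ ⟪d x, d x⟫ := real_inner_self_nonneg
        nlinarith [neg_abs_le (b ws.1 ((G (vp.1 + t • ws.1, vp.2 + t • ws.2)).1 - (G vp).1) x),
          mul_pos hρ hγ, mul_pos hρ ht]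
      have h9 : ‖x‖ ≤ ρ * t * (M * ‖ws.1‖ * ‖(G (vp.1 + t • ws.1, vp.2 + t • ws.2)).1 - (G vp).1‖) := by
        rw [real_inner_self_eq_norm_sq] at h6
        nlinarith [norm_nonneg x, mul_nonneg (mul_nonneg (mul_nonneg hρ.le ht.le) (mul_nonneg hM0 (norm_nonneg ws.1))) (norm_nonneg ((G (vp.1 + t • ws.1, vp.2 + t • ws.2)).1 - (G vp).1))]
      have h10 : t * ‖(G' vp ws).1‖ ≤ ‖(G (vp.1 + t • ws.1, vp.2 + t • ws.2)).1 - (G vp).1‖ + ‖x‖ := by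
        have : t • (G' vp ws).1 = ((G (vp.1 + t • ws.1, vp.2 + t • ws.2)).1 - (G vp).1) - x := by
          rw [hxdef]; abel
        calc t * ‖(G' vp ws).1‖ = ‖t • (G' vp ws).1‖ := by
              rw [norm_smul, Real.norm_eq_abs, abs_of_pos ht]
          _ = ‖((G (vp.1 + t • ws.1, vp.2 + t • ws.2)).1 - (G vp).1) - x‖ := by rw [this]
          _ ≤ _ := norm_sub_le _ _
      -- combine
      have h9' : ‖x‖ ≤ ρ * t * (M * ‖ws.1‖) * (C_L * Real.sqrt (‖ws.1‖ ^ 2 + α * ‖ws.2‖ ^ 2) * t) := by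
        have := mul_le_mul_of_nonneg_left hDtb
          (show (0:ℝ) ≤ ρ * t * (M * ‖ws.1‖) by positivity)
        nlinarith [h9]
      have h11 : t * ‖(G' vp ws).1‖
          ≤ t * (C_L * Real.sqrt (‖ws.1‖ ^ 2 + α * ‖ws.2‖ ^ 2)
            + (ρ * M * ‖ws.1‖ * (C_L * Real.sqrt (‖ws.1‖ ^ 2 + α * ‖ws.2‖ ^ 2))) * t) := by
        nlinarith [hDtb, h9', h10]
      exact le_of_mul_le_mul_left (by linarith [h11]) ht
    refine le_of_forall_pos_le_add ?_
    intro ε hε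
    set K := ρ * M * ‖ws.1‖ * (C_L * Real.sqrt (‖ws.1‖ ^ 2 + α * ‖ws.2‖ ^ 2)) with hKdef
    have hK0 : 0 ≤ K := by
      apply mul_nonneg _ hCLT
      positivity
    have ht0 : 0 < ε / (K + 1) := by positivity
    have h12 := main (ε / (K + 1)) ht0
    have h13 : K * (ε / (K + 1)) ≤ ε := by
      rw [mul_div_assoc']
      rw [div_le_iff₀ (by linarith : (0:ℝ) < K + 1)]
      nlinarith
    linarith
  -- now the specific difference of derivatives
  set gP := G' (u + w, p + s) (θ, ξ) with hgPdef
  set g0 := G' (u, p) (θ, ξ) with hg0def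
  -- equation for e₁
  have hE : ∀ y : X,
      ⟪gP.1 - g0.1, y⟫ + ρ * b θ ((G (u + w, p + s)).1 - (G (u, p)).1) y
        + ρ * b (u + w) (gP.1 - g0.1) y + ρ * b w g0.1 y
        + ρ * γ * ⟪d gP.1 - d g0.1, d y⟫ = 0 := by
    intro y
    have h1 := hG'1 (u + w, p + s) (θ, ξ) y
    have h2 := hG'1 (u, p) (θ, ξ) y
    rw [← hgPdef] at h1
    rw [← hg0def] at h2
    simp only [map_sub, map_add, LinearMap.sub_apply, LinearMap.add_apply,
      inner_sub_left] at h1 h2 ⊢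
    linear_combination h1 - h2
  -- q-relation for e
  have hQrel : ∀ q : Q, α * ⟪gP.2 - g0.2, q⟫ + ρ * ⟪d gP.1 - d g0.1, q⟫ = 0 := by
    intro q
    have h1 := hG'2 (u + w, p + s) (θ, ξ) q
    have h2 := hG'2 (u, p) (θ, ξ) q
    rw [← hgPdef] at h1
    rw [← hg0def] at h2
    simp only [inner_sub_left] at h1 h2 ⊢
    linear_combination h1 - h2
  -- d e₁ = 0
  have hde0 : d gP.1 - d g0.1 = 0 := by
    have key : ∀ z : Q, ρ * ⟪z, d gP.1 - d g0.1⟫ = 0 := by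
      intro z
      have h1 := hE ((G ((0:X), z)).1 - (G ((0:X), (0:Q))).1)
      rw [hbδ' θ ((G (u + w, p + s)).1 - (G (u, p)).1) z,
        hbδ' (u + w) (gP.1 - g0.1) z, hbδ' w g0.1 z] at h1
      have h2 := hδeq z (gP.1 - g0.1)
      have h4 : d ((G ((0:X), z)).1 - (G ((0:X), (0:Q))).1)
          = d (G ((0:X), z)).1 - d (G ((0:X), (0:Q))).1 := map_sub d _ _
      have h3 : d (gP.1 - g0.1) = d gP.1 - d g0.1 := map_sub d _ _
      rw [h4] at h1
      rw [h3] at h2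
      have hc1 : ⟪gP.1 - g0.1, (G ((0:X), z)).1 - (G ((0:X), (0:Q))).1⟫
          = ⟪(G ((0:X), z)).1 - (G ((0:X), (0:Q))).1, gP.1 - g0.1⟫ := real_inner_comm _ _
      have hc2 : ⟪d gP.1 - d g0.1, d (G ((0:X), z)).1 - d (G ((0:X), (0:Q))).1⟫
          = ⟪d (G ((0:X), z)).1 - d (G ((0:X), (0:Q))).1, d gP.1 - d g0.1⟫ := real_inner_comm _ _
      linear_combination h1 - h2 - hc1 - ρ * γ * hc2
    have h4 := key (d gP.1 - d g0.1)
    have h5 : ⟪d gP.1 - d g0.1, d gP.1 - d g0.1⟫ = 0 := by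
      rcases mul_eq_zero.mp h4 with h | h
      · exact absurd h hρ0
      · exact h
    exact inner_self_eq_zero.mp h5
  -- e₂ = 0
  have he2 : gP.2 - g0.2 = 0 := by
    have h := hQrel (gP.2 - g0.2)
    rw [hde0] at h
    simp only [inner_zero_left, mul_zero, add_zero] at h
    have h5 : ⟪gP.2 - g0.2, gP.2 - g0.2⟫ = 0 := by
      rcases mul_eq_zero.mp h with h' | h'
      · exact absurd h' (ne_of_gt hα)
      · exact h'
    exact inner_self_eq_zero.mp h5
  -- energy bound for e₁
  have hDGb : ‖(G (u + w, p + s)).1 - (G (u, p)).1‖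
      ≤ C_L * Real.sqrt (‖w‖ ^ 2 + α * ‖s‖ ^ 2) := by
    have h := hlip2 (u + w, p + s) (u, p)
    simp only [add_sub_cancel_left] at h
    have hCL : (0:ℝ) ≤ C_L * Real.sqrt (‖w‖ ^ 2 + α * ‖s‖ ^ 2) := by
      have h0 := hlip (u + w, p + s) (u, p)
      simp only [add_sub_cancel_left] at h0
      exact le_trans (Real.sqrt_nonneg _) h0
    have hsq : Real.sqrt (‖w‖ ^ 2 + α * ‖s‖ ^ 2) ^ 2 = ‖w‖ ^ 2 + α * ‖s‖ ^ 2 :=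
      Real.sq_sqrt (by positivity)
    nlinarith [norm_nonneg ((G (u + w, p + s)).1 - (G (u, p)).1),
      mul_nonneg hα.le (sq_nonneg ‖(G (u + w, p + s)).2 - (G (u, p)).2‖)]
  have hg0b : ‖g0.1‖ ≤ C_L * Real.sqrt (‖θ‖ ^ 2 + α * ‖ξ‖ ^ 2) := by
    have h := hgb (u, p) (θ, ξ)
    rw [← hg0def] at h
    exact h
  have he1b : ‖gP.1 - g0.1‖
      ≤ ρ * M * ‖θ‖ * (C_L * Real.sqrt (‖w‖ ^ 2 + α * ‖s‖ ^ 2))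
        + ρ * M * ‖w‖ * (C_L * Real.sqrt (‖θ‖ ^ 2 + α * ‖ξ‖ ^ 2)) := by
    have h1 := hE (gP.1 - g0.1)
    rw [hskew (u + w) (gP.1 - g0.1)] at h1
    have h3 : d (gP.1 - g0.1) = d gP.1 - d g0.1 := by simp [map_sub]
    rw [h3, hde0] at h1
    simp only [inner_zero_left, inner_zero_right, mul_zero, add_zero] at h1
    have h4 := hMb θ ((G (u + w, p + s)).1 - (G (u, p)).1) (gP.1 - g0.1)
    have h5 := hMb w g0.1 (gP.1 - g0.1)
    have h6 : ⟪gP.1 - g0.1, gP.1 - g0.1⟫ = ‖gP.1 - g0.1‖ ^ 2 := real_inner_self_eq_norm_sq _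
    rw [h6] at h1
    -- ‖e‖² ≤ ρ(M‖θ‖‖DG‖ + M‖w‖‖g0‖)‖e‖
    have h7 : ‖gP.1 - g0.1‖ ^ 2
        ≤ (ρ * M * ‖θ‖ * ‖(G (u + w, p + s)).1 - (G (u, p)).1‖
          + ρ * M * ‖w‖ * ‖g0.1‖) * ‖gP.1 - g0.1‖ := by
      nlinarith [neg_abs_le (b θ ((G (u + w, p + s)).1 - (G (u, p)).1) (gP.1 - g0.1)),
        neg_abs_le (b w g0.1 (gP.1 - g0.1)), hρ.le]
    have h8 : ‖gP.1 - g0.1‖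
        ≤ ρ * M * ‖θ‖ * ‖(G (u + w, p + s)).1 - (G (u, p)).1‖ + ρ * M * ‖w‖ * ‖g0.1‖ := by
      nlinarith [norm_nonneg (gP.1 - g0.1),
        mul_nonneg (mul_nonneg (mul_nonneg hρ.le hM0) (norm_nonneg θ)) (norm_nonneg ((G (u + w, p + s)).1 - (G (u, p)).1)),
        mul_nonneg (mul_nonneg (mul_nonneg hρ.le hM0) (norm_nonneg w)) (norm_nonneg g0.1)]
    have h9 : ρ * M * ‖θ‖ * ‖(G (u + w, p + s)).1 - (G (u, p)).1‖
        ≤ ρ * M * ‖θ‖ * (C_L * Real.sqrt (‖w‖ ^ 2 + α * ‖s‖ ^ 2)) := by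
      apply mul_le_mul_of_nonneg_left hDGb
      positivity
    have h10 : ρ * M * ‖w‖ * ‖g0.1‖ ≤ ρ * M * ‖w‖ * (C_L * Real.sqrt (‖θ‖ ^ 2 + α * ‖ξ‖ ^ 2)) := by
      apply mul_le_mul_of_nonneg_left hg0b
      positivity
    linarith
  -- final assembly
  rw [he2]
  simp only [norm_zero]
  have hT0 : (0:ℝ) ≤ Real.sqrt (‖θ‖ ^ 2 + α * ‖ξ‖ ^ 2) := Real.sqrt_nonneg _
  have hW0 : (0:ℝ) ≤ Real.sqrt (‖w‖ ^ 2 + α * ‖s‖ ^ 2) := Real.sqrt_nonneg _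
  have hsq0 : Real.sqrt (‖gP.1 - g0.1‖ ^ 2 + α * 0 ^ 2) = ‖gP.1 - g0.1‖ := by
    rw [show ‖gP.1 - g0.1‖ ^ 2 + α * 0 ^ 2 = ‖gP.1 - g0.1‖ ^ 2 by ring]
    exact Real.sqrt_sq (norm_nonneg _)
  rw [hsq0]
  -- θ-norm and w-norm bounds
  have hθT : ‖θ‖ ≤ Real.sqrt (‖θ‖ ^ 2 + α * ‖ξ‖ ^ 2) := by
    have h := Real.sqrt_le_sqrt (show ‖θ‖ ^ 2 ≤ ‖θ‖ ^ 2 + α * ‖ξ‖ ^ 2 by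
      nlinarith [mul_nonneg hα.le (sq_nonneg ‖ξ‖)])
    rwa [Real.sqrt_sq (norm_nonneg θ)] at h
  have hwW : ‖w‖ ≤ Real.sqrt (‖w‖ ^ 2 + α * ‖s‖ ^ 2) := by
    have h := Real.sqrt_le_sqrt (show ‖w‖ ^ 2 ≤ ‖w‖ ^ 2 + α * ‖s‖ ^ 2 by
      nlinarith [mul_nonneg hα.le (sq_nonneg ‖s‖)])
    rwa [Real.sqrt_sq (norm_nonneg w)] at h
  by_cases hWz : Real.sqrt (‖w‖ ^ 2 + α * ‖s‖ ^ 2) = 0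
  · -- degenerate case : w = 0, s = 0
    have hw0 : ‖w‖ = 0 := by
      have := hwW; rw [hWz] at this; linarith [norm_nonneg w]
    have hwz : w = 0 := norm_eq_zero.mp hw0
    have hsz : s = 0 := by
      have h := Real.sqrt_eq_zero'.mp hWz
      have : α * ‖s‖ ^ 2 ≤ 0 := by nlinarith [sq_nonneg ‖w‖]
      have : ‖s‖ ^ 2 ≤ 0 := by nlinarith
      have : ‖s‖ = 0 := by nlinarith [sq_nonneg ‖s‖, norm_nonneg s]
      exact norm_eq_zero.mp this
    have hPP : gP = g0 := by
      rw [hgPdef, hg0def, hwz, hsz, add_zero, add_zero]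
    rw [hPP, sub_self, norm_zero]
    positivity
  · have hWpos : 0 < Real.sqrt (‖w‖ ^ 2 + α * ‖s‖ ^ 2) := lt_of_le_of_ne hW0 (Ne.symm hWz)
    have hCLW : (0:ℝ) ≤ C_L * Real.sqrt (‖w‖ ^ 2 + α * ‖s‖ ^ 2) := by
      have h0 := hlip (u + w, p + s) (u, p)
      simp only [add_sub_cancel_left] at h0
      exact le_trans (Real.sqrt_nonneg _) h0
    have hCL0 : (0:ℝ) ≤ C_L := by
      by_contra hneg
      push_neg at hneg
      nlinarith
    -- main chain
    have hx : (0:ℝ) ≤ ρ ^ 2 * α⁻¹ := by positivity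
    have hx1 : ρ ^ 2 * α⁻¹ < 1 := by
      rw [mul_inv_lt_iff₀ hα] -- maybe wrong name
      linarith
    have hfrac : 4 * ρ ^ 2 * M ^ 2 * C_L ^ 2 ≤ 4 * ρ ^ 2 * M ^ 2 * C_L ^ 2 / (1 - ρ ^ 2 * α⁻¹) := by
      rw [le_div_iff₀ (by linarith : (0:ℝ) < 1 - ρ ^ 2 * α⁻¹)]
      nlinarith [sq_nonneg (ρ * M * C_L)]
    have hsqrt1 : 2 * ρ * M * C_L ≤ Real.sqrt (4 * ρ ^ 2 * M ^ 2 * C_L ^ 2 / (1 - ρ ^ 2 * α⁻¹)) := by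
      have h1 : Real.sqrt (4 * ρ ^ 2 * M ^ 2 * C_L ^ 2) = 2 * ρ * M * C_L := by
        rw [show 4 * ρ ^ 2 * M ^ 2 * C_L ^ 2 = (2 * ρ * M * C_L) ^ 2 by ring]
        exact Real.sqrt_sq (by positivity)
      calc 2 * ρ * M * C_L = Real.sqrt (4 * ρ ^ 2 * M ^ 2 * C_L ^ 2) := h1.symm
        _ ≤ _ := Real.sqrt_le_sqrt hfrac
    calc ‖gP.1 - g0.1‖
        ≤ ρ * M * ‖θ‖ * (C_L * Real.sqrt (‖w‖ ^ 2 + α * ‖s‖ ^ 2))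
          + ρ * M * ‖w‖ * (C_L * Real.sqrt (‖θ‖ ^ 2 + α * ‖ξ‖ ^ 2)) := he1b
      _ ≤ 2 * ρ * M * C_L * Real.sqrt (‖θ‖ ^ 2 + α * ‖ξ‖ ^ 2) * Real.sqrt (‖w‖ ^ 2 + α * ‖s‖ ^ 2) := by
          have hCLT : (0:ℝ) ≤ C_L * Real.sqrt (‖θ‖ ^ 2 + α * ‖ξ‖ ^ 2) := mul_nonneg hCL0 hT0
          have k1 := mul_le_mul_of_nonneg_left (mul_le_mul_of_nonneg_right hθT hCLW)
            (show (0:ℝ) ≤ ρ * M by positivity)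
          have k2 := mul_le_mul_of_nonneg_left (mul_le_mul_of_nonneg_right hwW hCLT)
            (show (0:ℝ) ≤ ρ * M by positivity)
          nlinarith [k1, k2]
      _ ≤ Real.sqrt (4 * ρ ^ 2 * M ^ 2 * C_L ^ 2 / (1 - ρ ^ 2 * α⁻¹))
          * Real.sqrt (‖θ‖ ^ 2 + α * ‖ξ‖ ^ 2) * Real.sqrt (‖w‖ ^ 2 + α * ‖s‖ ^ 2) := by
          apply mul_le_mul_of_nonneg_right _ hW0
          apply mul_le_mul_of_nonneg_right _ hT0
          exact hsqrt1
end
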